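/- With d, μ, ν, λ and the unit vector ξ fixed, the map D ↦ w_*(ξ; D) is nondecreasing on (0, ∞); moreover, if 0 < D < D' and w_*(ξ; D) > c_K, then w_*(ξ; D) < w_*(ξ; D'). -/

import Mathlib

open Real Set

noncomputable section

/-- χ(s) = μ s / (ν + s). -/
def chiF (μ ν s : ℝ) : ℝ := μ * s / (ν + s)

/-- The set S(c) of points (β, α) with β > -ν/d and
c ξ₁ α + c ξ₂ β − D α² + χ(dβ) ≥ 0. -/
def Sset (d D μ ν ξ1 ξ2 c : ℝ) : Set (ℝ × ℝ) :=
  {p : ℝ × ℝ | -(ν / d) < p.1 ∧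
    0 ≤ c * ξ1 * p.2 + c * ξ2 * p.1 - D * p.2 ^ 2 + chiF μ ν (d * p.1)}

/-- The set G(c) of points (β, α) with c ξ₁ α + c ξ₂ β − d(α² + β²) ≥ λ. -/
def Gset (d lam ξ1 ξ2 c : ℝ) : Set (ℝ × ℝ) :=
  {p : ℝ × ℝ | lam ≤ c * ξ1 * p.2 + c * ξ2 * p.1 - d * (p.2 ^ 2 + p.1 ^ 2)}

/-- w_*(ξ): the least c > 0 such that S(c) ∩ G(c) ≠ ∅. -/
def wstar (d D μ ν lam ξ1 ξ2 : ℝ) : ℝ :=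
  sInf {c : ℝ | 0 < c ∧ (Sset d D μ ν ξ1 ξ2 c ∩ Gset d lam ξ1 ξ2 c).Nonempty}

/-- w_*(θ) := w_*((sin|θ|, cos|θ|)). -/
def wtheta (d D μ ν lam θ : ℝ) : ℝ :=
  wstar d D μ ν lam (Real.sin |θ|) (Real.cos |θ|)

/-- Φ(s) = 2d + D(s² − 1) + 4d²μs/(2νc_K + c_K²s). -/
def PhiF (d D μ ν cK s : ℝ) : ℝ :=
  2 * d + D * (s ^ 2 - 1) + 4 * d ^ 2 * μ * s / (2 * ν * cK + cK ^ 2 * s)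

def Aset (d D μ ν lam ξ1 ξ2 : ℝ) : Set ℝ :=
  {c : ℝ | 0 < c ∧ (Sset d D μ ν ξ1 ξ2 c ∩ Gset d lam ξ1 ξ2 c).Nonempty}

lemma wstar_eq (d D μ ν lam ξ1 ξ2 : ℝ) :
    wstar d D μ ν lam ξ1 ξ2 = sInf (Aset d D μ ν lam ξ1 ξ2) := rfl

lemma chiF_nonneg {μ ν s : ℝ} (hμ : 0 ≤ μ) (hν : 0 < ν) (hs : 0 ≤ s) :
    0 ≤ chiF μ ν s :=
  div_nonneg (mul_nonneg hμ hs) (by linarith)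

lemma Aset_bdd (d D μ ν lam ξ1 ξ2 : ℝ) : BddBelow (Aset d D μ ν lam ξ1 ξ2) :=
  ⟨0, fun c hc => le_of_lt hc.1⟩

lemma Aset_upward {d D μ ν lam ξ1 ξ2 : ℝ} (hd : 0 < d) (hlam : 0 < lam)
    {c c' : ℝ} (hc : c ∈ Aset d D μ ν lam ξ1 ξ2) (hcc : c ≤ c') :
    c' ∈ Aset d D μ ν lam ξ1 ξ2 := by
  obtain ⟨hcpos, ⟨p, hS, hG⟩⟩ := hc
  have hc' : 0 < c' := lt_of_lt_of_le hcpos hcc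
  refine ⟨hc', ⟨p, ?_, ?_⟩⟩
  · obtain ⟨h1, h2⟩ := hS
    refine ⟨h1, ?_⟩
    have hP : 0 < ξ1 * p.2 + ξ2 * p.1 := by
      have hG' : lam ≤ c * ξ1 * p.2 + c * ξ2 * p.1 - d * (p.2 ^ 2 + p.1 ^ 2) := hG
      nlinarith [sq_nonneg p.1, sq_nonneg p.2]
    nlinarith
  · have hG' : lam ≤ c * ξ1 * p.2 + c * ξ2 * p.1 - d * (p.2 ^ 2 + p.1 ^ 2) := hG
    have hP : 0 < ξ1 * p.2 + ξ2 * p.1 := by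
      nlinarith [sq_nonneg p.1, sq_nonneg p.2]
    show lam ≤ c' * ξ1 * p.2 + c' * ξ2 * p.1 - d * (p.2 ^ 2 + p.1 ^ 2)
    nlinarith

lemma Aset_big {d D μ ν lam ξ1 ξ2 : ℝ} (hd : 0 < d) (hμ : 0 < μ) (hν : 0 < ν)
    (hlam : 0 < lam) (hξ1 : 0 ≤ ξ1) (hξ2 : 0 ≤ ξ2) (hunit : ξ1 ^ 2 + ξ2 ^ 2 = 1)
    (hD : 0 < D) :
    max (max D (d + lam)) 1 ∈ Aset d D μ ν lam ξ1 ξ2 := by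
  set c := max (max D (d + lam)) 1 with hc
  have hc1 : (1:ℝ) ≤ c := le_max_right _ _
  have hcD : D ≤ c := le_trans (le_max_left _ _) (le_max_left _ _)
  have hcdl : d + lam ≤ c := le_trans (le_max_right _ _) (le_max_left _ _)
  have hcpos : 0 < c := by linarith
  refine ⟨hcpos, ⟨(ξ2, ξ1), ⟨?_, ?_⟩, ?_⟩⟩
  · show -(ν / d) < ξ2
    have : 0 < ν / d := div_pos hν hd
    linarith
  · show 0 ≤ c * ξ1 * ξ1 + c * ξ2 * ξ2 - D * ξ1 ^ 2 + chiF μ ν (d * ξ2)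
    have hχ : 0 ≤ chiF μ ν (d * ξ2) := chiF_nonneg (le_of_lt hμ) hν (by positivity)
    have h1 : c * ξ1 * ξ1 + c * ξ2 * ξ2 = c := by
      have : ξ1 * ξ1 + ξ2 * ξ2 = 1 := by nlinarith
      nlinarith
    nlinarith [sq_nonneg ξ1]
  · show lam ≤ c * ξ1 * ξ1 + c * ξ2 * ξ2 - d * (ξ1 ^ 2 + ξ2 ^ 2)
    have h1 : c * ξ1 * ξ1 + c * ξ2 * ξ2 = c := by nlinarith
    rw [hunit, h1]
    linarith

lemma Aset_anti {d D D' μ ν lam ξ1 ξ2 : ℝ} (hDD' : D ≤ D') :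
    Aset d D' μ ν lam ξ1 ξ2 ⊆ Aset d D μ ν lam ξ1 ξ2 := by
  rintro c ⟨hcpos, ⟨p, ⟨h1, h2⟩, hG⟩⟩
  refine ⟨hcpos, ⟨p, ⟨h1, ?_⟩, hG⟩⟩
  nlinarith [sq_nonneg p.2]

lemma wstar_mono {d μ ν lam ξ1 ξ2 : ℝ} (hd : 0 < d) (hμ : 0 < μ) (hν : 0 < ν)
    (hlam : 0 < lam) (hξ1 : 0 ≤ ξ1) (hξ2 : 0 ≤ ξ2) (hunit : ξ1 ^ 2 + ξ2 ^ 2 = 1)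
    {D D' : ℝ} (hD : 0 < D) (hDD' : D ≤ D') :
    wstar d D μ ν lam ξ1 ξ2 ≤ wstar d D' μ ν lam ξ1 ξ2 := by
  rw [wstar_eq, wstar_eq]
  exact csInf_le_csInf (Aset_bdd _ _ _ _ _ _ _)
    ⟨_, Aset_big hd hμ hν hlam hξ1 hξ2 hunit (lt_of_lt_of_le hD hDD')⟩
    (Aset_anti hDD')

lemma denom_lb {μ ν M x : ℝ} (hμ : 0 < μ) (hν : 0 < ν) (hM : 0 ≤ M)
    (hx : 0 < ν + x) (h : -M ≤ chiF μ ν x) : ν * μ / (μ + M) ≤ ν + x := by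
  have hμM : 0 < μ + M := by linarith
  rcases le_or_gt 0 x with hx0 | hx0
  · have h1 : ν * μ / (μ + M) ≤ ν := by
      rw [div_le_iff₀ hμM]; nlinarith
    linarith
  · have h2 : -M * (ν + x) ≤ μ * x := by
      have := (le_div_iff₀ hx).mp h
      unfold chiF at h
      rw [le_div_iff₀ hx] at h
      linarith
    rw [div_le_iff₀ hμM]
    nlinarith

lemma chi_diff_ge {μ ν ρ x y e : ℝ} (hμ : 0 < μ) (hν : 0 < ν) (hρ : 0 < ρ)
    (hx : ρ ≤ ν + x) (hy : ρ ≤ ν + y) (he : |x - y| ≤ e) :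
    -(μ * ν * e / ρ ^ 2) ≤ chiF μ ν x - chiF μ ν y := by
  have hx0 : 0 < ν + x := lt_of_lt_of_le hρ hx
  have hy0 : 0 < ν + y := lt_of_lt_of_le hρ hy
  have he1 : -e ≤ x - y := (abs_le.mp he).1
  have he0 : 0 ≤ e := le_trans (abs_nonneg _) he
  have key : chiF μ ν x - chiF μ ν y = μ * ν * (x - y) / ((ν + x) * (ν + y)) := by
    unfold chiF; field_simp; ring
  rw [key, ← neg_div, div_le_div_iff₀ (by positivity) (by positivity)]
  have hDP : ρ * ρ ≤ (ν + x) * (ν + y) := mul_le_mul hx hy (le_of_lt hρ) (le_of_lt hx0)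
  nlinarith [mul_nonneg (mul_nonneg (mul_pos hμ hν).le he0) (sub_nonneg.mpr hDP),
    mul_nonneg (mul_nonneg (mul_pos hμ hν).le (sq_nonneg ρ)) (by linarith : (0:ℝ) ≤ e + (x - y))]

lemma mul_le_bound {u v U V : ℝ} (hu0 : 0 ≤ u) (huU : u ≤ U) (hv : v ≤ V)
    (hV0 : 0 ≤ V) : u * v ≤ U * V := by
  nlinarith [mul_le_mul_of_nonneg_left hv hu0, mul_le_mul_of_nonneg_right huU hV0]

lemma mem_Aset_xi1zero {d D μ ν lam c : ℝ} (hd : 0 < d) (hμ : 0 < μ) (hν : 0 < ν)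
    (hlam : 0 < lam) (hc : 2 * Real.sqrt (d * lam) < c) :
    c ∈ Aset d D μ ν lam 0 1 := by
  have hcK0 : 0 ≤ 2 * Real.sqrt (d * lam) := by positivity
  have hcpos : 0 < c := lt_of_le_of_lt hcK0 hc
  have hc2 : 4 * d * lam < c ^ 2 := by
    nlinarith [Real.sq_sqrt (le_of_lt (mul_pos hd hlam)), Real.sqrt_nonneg (d * lam)]
  refine ⟨hcpos, ⟨(c / (2 * d), 0), ⟨?_, ?_⟩, ?_⟩⟩
  · show -(ν / d) < c / (2 * d)
    have h1 : 0 < ν / d := div_pos hν hd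
    have h2 : 0 < c / (2 * d) := by positivity
    linarith
  · show 0 ≤ c * 0 * 0 + c * 1 * (c / (2 * d)) - D * 0 ^ 2 + chiF μ ν (d * (c / (2 * d)))
    have hχ : 0 ≤ chiF μ ν (d * (c / (2 * d))) := chiF_nonneg hμ.le hν (by positivity)
    have h2 : 0 ≤ c * (c / (2 * d)) := by positivity
    nlinarith
  · show lam ≤ c * 0 * 0 + c * 1 * (c / (2 * d)) - d * ((0:ℝ) ^ 2 + (c / (2 * d)) ^ 2)
    have he : c * 0 * 0 + c * 1 * (c / (2 * d)) - d * ((0:ℝ) ^ 2 + (c / (2 * d)) ^ 2)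
        = c ^ 2 / (4 * d) := by field_simp; ring
    rw [he, le_div_iff₀ (by positivity)]
    nlinarith

set_option maxHeartbeats 1000000 in
theorem statement19
    (d μ ν lam : ℝ) (hd : 0 < d) (hμ : 0 < μ) (hν : 0 < ν) (hlam : 0 < lam)
    (ξ1 ξ2 : ℝ) (hξ1 : 0 ≤ ξ1) (hξ2 : 0 ≤ ξ2) (hunit : ξ1 ^ 2 + ξ2 ^ 2 = 1) :
    (∀ D D' : ℝ, 0 < D → D ≤ D' →
      wstar d D μ ν lam ξ1 ξ2 ≤ wstar d D' μ ν lam ξ1 ξ2) ∧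
    (∀ D D' : ℝ, 0 < D → D < D' →
      2 * Real.sqrt (d * lam) < wstar d D μ ν lam ξ1 ξ2 →
      wstar d D μ ν lam ξ1 ξ2 < wstar d D' μ ν lam ξ1 ξ2) := by
  have hξ1le : ξ1 ≤ 1 := by nlinarith [sq_nonneg ξ1, sq_nonneg ξ2]
  have hξ2le : ξ2 ≤ 1 := by nlinarith [sq_nonneg ξ1, sq_nonneg ξ2]
  constructor
  · intro D D' hD hDD'
    exact wstar_mono hd hμ hν hlam hξ1 hξ2 hunit hD hDD'
  · intro D D' hD hDD' hcK
    by_contra hcon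
    push_neg at hcon
    have hD' : 0 < D' := hD.trans hDD'
    have hle : wstar d D μ ν lam ξ1 ξ2 ≤ wstar d D' μ ν lam ξ1 ξ2 :=
      wstar_mono hd hμ hν hlam hξ1 hξ2 hunit hD hDD'.le
    set w := wstar d D μ ν lam ξ1 ξ2 with hwdef
    clear_value w
    have hcK0 : 0 < 2 * Real.sqrt (d * lam) := by positivity
    have hwpos : 0 < w := lt_trans hcK0 hcK
    have hw2 : 4 * d * lam < w ^ 2 := by
      nlinarith [Real.sq_sqrt (mul_pos hd hlam).le, Real.sqrt_nonneg (d * lam)]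
    -- ξ1 is positive
    have hξ1pos : 0 < ξ1 := by
      rcases lt_or_eq_of_le hξ1 with h | h
      · exact h
      · exfalso
        have hξ10 : ξ1 = 0 := h.symm
        have hξ2sq : ξ2 ^ 2 = 1 := by rw [hξ10] at hunit; linarith [hunit]
        have hξ21 : ξ2 = 1 := by
          have h2 : (ξ2 - 1) * (ξ2 + 1) = 0 := by linear_combination hξ2sq
          rcases mul_eq_zero.mp h2 with h3 | h3
          · linarith
          · linarith
        set c0 := (2 * Real.sqrt (d * lam) + w) / 2 with hc0
        clear_value c0
        have hc0gt : 2 * Real.sqrt (d * lam) < c0 := by rw [hc0]; linarith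
        have hmem := mem_Aset_xi1zero (D := D) hd hμ hν hlam hc0gt
        have hmem' : c0 ∈ Aset d D μ ν lam ξ1 ξ2 := by rw [hξ10, hξ21]; exact hmem
        have hwc0 : w ≤ c0 := by
          rw [hwdef, wstar_eq]; exact csInf_le (Aset_bdd _ _ _ _ _ _ _) hmem'
        rw [hc0] at hwc0; linarith
    have heq : wstar d D' μ ν lam ξ1 ξ2 = w := le_antisymm hcon hle
    have hAD' : ∀ t : ℝ, w < t → t ∈ Aset d D' μ ν lam ξ1 ξ2 := by
      intro t ht
      have hne : (Aset d D' μ ν lam ξ1 ξ2).Nonempty :=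
        ⟨_, Aset_big hd hμ hν hlam hξ1 hξ2 hunit hD'⟩
      have hlt : sInf (Aset d D' μ ν lam ξ1 ξ2) < t := by
        rw [← wstar_eq, heq]; exact ht
      obtain ⟨b, hb, hbc⟩ := exists_lt_of_csInf_lt hne hlt
      exact Aset_upward hd hlam hb hbc.le
    have hAD : ∀ t : ℝ, t ∈ Aset d D μ ν lam ξ1 ξ2 → w ≤ t := by
      intro t ht
      rw [hwdef, wstar_eq]
      exact csInf_le (Aset_bdd _ _ _ _ _ _ _) ht
    clear hcon hle heq hwdef hcK
    -- constants
    set K := max d D' with hKdef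
    clear_value K
    have hKd : d ≤ K := by rw [hKdef]; exact le_max_left _ _
    have hKD' : D' ≤ K := by rw [hKdef]; exact le_max_right _ _
    have hKpos : 0 < K := lt_of_lt_of_le hd hKd
    set α₀ := w * ξ1 / (8 * K) with hα₀def
    clear_value α₀
    have hα₀pos : 0 < α₀ := by rw [hα₀def]; exact div_pos (mul_pos hwpos hξ1pos) (by linarith)
    have hα₀K : 8 * K * α₀ = w * ξ1 := by
      rw [hα₀def]; field_simp
    set δ := (D' - D) * α₀ ^ 2 with hδdef
    clear_value δ
    have hδpos : 0 < δ := by rw [hδdef]; exact mul_pos (by linarith) (pow_pos hα₀pos 2)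
    set B := 2 * (w + 1) / d with hBdef
    clear_value B
    have hBpos : 0 < B := by rw [hBdef]; exact div_pos (by linarith) hd
    have hwd2 : 0 < (w + 1) / (2 * d) := div_pos (by linarith) (by linarith)
    set C₁ := B + α₀ + (w + 1) / (2 * d) + 1 with hC₁def
    clear_value C₁
    have hC₁pos : 0 < C₁ := by rw [hC₁def]; linarith
    have hC₁1 : 1 ≤ C₁ := by rw [hC₁def]; linarith
    have hBC₁ : B ≤ C₁ := by rw [hC₁def]; linarith
    set M := 4 * (w + 1) ^ 2 / d with hMdef
    clear_value M
    have hM0 : 0 ≤ M := by rw [hMdef]; positivity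
    set ρ := ν * μ / (μ + M) with hρdef
    clear_value ρ
    have hρpos : 0 < ρ := by rw [hρdef]; exact div_pos (mul_pos hν hμ) (by linarith)
    have hρν : ρ ≤ ν := by
      rw [hρdef, div_le_iff₀ (by linarith)]; nlinarith
    set T := 2 * C₁ * d * μ * ν / ρ ^ 2 with hTdef
    clear_value T
    have hT0 : 0 ≤ T := by
      rw [hTdef]
      exact div_nonneg
        (le_of_lt (mul_pos (mul_pos (mul_pos (mul_pos two_pos hC₁pos) hd) hμ) hν))
        (sq_nonneg ρ)
    set L := 4 * (w + 1) * C₁ + 4 * D' * C₁ ^ 2 + T + δ + 1 with hLdef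
    clear_value L
    have hsum0 : 0 < 4 * (w + 1) * C₁ := mul_pos (by linarith) hC₁pos
    have hsum1 : 0 < 4 * D' * C₁ ^ 2 := mul_pos (by linarith) (pow_pos hC₁pos 2)
    have hLbig : 4 * (w + 1) * C₁ + 4 * D' * C₁ ^ 2 + T ≤ L := by
      rw [hLdef]; linarith
    have hδL : δ + 1 ≤ L := by rw [hLdef]; linarith
    have hLpos : 0 < L := by linarith
    set κ := (w ^ 2 - 4 * d * lam) / (4 * d) with hκdef
    clear_value κ
    have hκpos : 0 < κ := by rw [hκdef]; exact div_pos (by linarith) (by linarith)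
    set s := δ / (2 * L) with hsdef
    clear_value s
    have hs0 : 0 < s := by rw [hsdef]; exact div_pos hδpos (by linarith)
    have hsL : s * L = δ / 2 := by
      rw [hsdef]; field_simp
    have hshalf : s ≤ 1 / 2 := by
      rw [hsdef, div_le_iff₀ (by linarith)]; linarith
    have h1s : 0 ≤ 1 - s := by linarith
    set X := min (min (δ / 2) (s * κ)) w with hXdef
    clear_value X
    have hX0 : 0 < X := by
      rw [hXdef]
      exact lt_min (lt_min (by linarith) (mul_pos hs0 hκpos)) hwpos
    have hXδ : X ≤ δ / 2 := by
      rw [hXdef]; exact le_trans (min_le_left _ _) (min_le_left _ _)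
    have hXκ : X ≤ s * κ := by
      rw [hXdef]; exact le_trans (min_le_left _ _) (min_le_right _ _)
    have hXw : X ≤ w := by rw [hXdef]; exact min_le_right _ _
    set η := X / (2 * C₁) with hηdef
    clear_value η
    have hη0 : 0 < η := by rw [hηdef]; exact div_pos hX0 (by linarith)
    have hη2C : η * (2 * C₁) = X := by
      rw [hηdef]; exact div_mul_cancel₀ X (by linarith)
    have hηw : η ≤ w := le_trans (by rw [hηdef]; exact div_le_self hX0.le (by linarith)) hXw
    set ε := min (η / 2) 1 with hεdef
    clear_value ε
    have hε0 : 0 < ε := by rw [hεdef]; exact lt_min (by linarith) one_pos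
    have hεη : ε ≤ η / 2 := by rw [hεdef]; exact min_le_left _ _
    have hε1 : ε ≤ 1 := by rw [hεdef]; exact min_le_right _ _
    set c := w + ε with hcdef
    clear_value c
    have hcw : w < c := by rw [hcdef]; linarith
    have hcw1 : c ≤ w + 1 := by rw [hcdef]; linarith
    have hcpos : 0 < c := by linarith
    -- get a witness at speed c for D'
    have hcmem : c ∈ Aset d D' μ ν lam ξ1 ξ2 := hAD' c hcw
    obtain ⟨-, ⟨⟨β, α⟩, hSmem, hGmem⟩⟩ := hcmem
    simp only [Sset, Gset, Set.mem_setOf_eq] at hSmem hGmem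
    obtain ⟨hSb, hSv⟩ := hSmem
    have hGv : lam ≤ c * ξ1 * α + c * ξ2 * β - d * (α ^ 2 + β ^ 2) := hGmem
    clear hGmem hAD'
    -- coordinate bounds
    have habsa : ξ1 * α ≤ |α| := by
      nlinarith only [mul_nonneg hξ1 (by linarith only [le_abs_self α] : (0:ℝ) ≤ |α| - α),
        mul_nonneg (by linarith only [hξ1le] : (0:ℝ) ≤ 1 - ξ1) (abs_nonneg α)]
    have habsb : ξ2 * β ≤ |β| := by
      nlinarith only [mul_nonneg hξ2 (by linarith only [le_abs_self β] : (0:ℝ) ≤ |β| - β),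
        mul_nonneg (by linarith only [hξ2le] : (0:ℝ) ≤ 1 - ξ2) (abs_nonneg β)]
    have hξα : c * ξ1 * α ≤ c * |α| := by
      nlinarith only [mul_le_mul_of_nonneg_left habsa hcpos.le]
    have hξβ : c * ξ2 * β ≤ c * |β| := by
      nlinarith only [mul_le_mul_of_nonneg_left habsb hcpos.le]
    have habsB : |α| + |β| ≤ 2 * c / d := by
      have hF : d * (α ^ 2 + β ^ 2) ≤ c * (|α| + |β|) := by
        nlinarith only [hGv, hξα, hξβ, hlam]
      have hT2 : (|α| + |β|) ^ 2 ≤ 2 * (α ^ 2 + β ^ 2) := by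
        nlinarith only [sq_nonneg (|α| - |β|), sq_abs α, sq_abs β]
      have hdt : d * (|α| + |β|) ^ 2 ≤ 2 * c * (|α| + |β|) := by
        nlinarith only [hF, mul_le_mul_of_nonneg_left hT2 hd.le]
      rcases (add_nonneg (abs_nonneg α) (abs_nonneg β)).eq_or_lt with h0 | h0
      · rw [← h0]
        exact le_of_lt (div_pos (by linarith only [hcpos]) hd)
      · have h9 : ((|α| + |β|) * d) * (|α| + |β|) ≤ (2 * c) * (|α| + |β|) := by
          nlinarith only [hdt]
        have h8 := le_of_mul_le_mul_right h9 h0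
        rw [le_div_iff₀ hd]
        linarith only [h8]
    have h2cd : 2 * c / d ≤ 2 * (w + 1) / d := by
      rw [div_le_div_iff₀ hd hd]
      nlinarith only [hcw1, hd]
    have hαB : |α| ≤ B := by
      rw [hBdef]; linarith only [habsB, h2cd, abs_nonneg β]
    have hβB : |β| ≤ B := by
      rw [hBdef]; linarith only [habsB, h2cd, abs_nonneg α]
    have hβlo : -C₁ ≤ β := by
      have h9 := (abs_le.mp (hβB.trans hBC₁)).1; linarith only [h9]
    have hβhi : β ≤ C₁ := (abs_le.mp (hβB.trans hBC₁)).2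
    -- lower bound on chi, hence on the denominator
    have hcab : c * (|α| + |β|) ≤ (w + 1) * (2 * (w + 1) / d) :=
      mul_le_bound hcpos.le hcw1 (habsB.trans h2cd)
        (le_of_lt (div_pos (by linarith only [hwpos]) hd))
    have hMle : (w + 1) * (2 * (w + 1) / d) ≤ M := by
      rw [hMdef, show (w + 1) * (2 * (w + 1) / d) = 2 * (w + 1) ^ 2 / d from by ring,
        div_le_div_iff₀ hd hd]
      nlinarith only [sq_nonneg (w + 1), hd, hwpos]
    have hχlb : -M ≤ chiF μ ν (d * β) := by
      nlinarith only [hSv, hξα, hξβ, hcab, hMle, mul_nonneg hD'.le (sq_nonneg α)]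
    have hνβ : 0 < ν + d * β := by
      have h1 : d * (ν / d) = ν := by field_simp
      nlinarith only [mul_lt_mul_of_pos_left hSb hd, h1]
    have hρβ : ρ ≤ ν + d * β := by
      rw [hρdef]; exact denom_lb hμ hν hM0 hνβ hχlb
    -- step A: replace α by a value ≥ α₀
    have hstep : ∃ a : ℝ, α₀ ≤ a ∧ a ≤ C₁ ∧
        0 ≤ c * ξ1 * a + c * ξ2 * β - D' * a ^ 2 + chiF μ ν (d * β) ∧
        lam ≤ c * ξ1 * a + c * ξ2 * β - d * (a ^ 2 + β ^ 2) := by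
      rcases le_or_gt |α| α₀ with h1 | h1
      · obtain ⟨hαl, hαu⟩ := abs_le.mp h1
        have h2 : w * ξ1 ≤ c * ξ1 := mul_le_mul_of_nonneg_right hcw.le hξ1
        refine ⟨α₀, le_refl _, by rw [hC₁def]; linarith only [hBpos, hwd2], ?_, ?_⟩
        · have hprod : 0 ≤ (α₀ - α) * (c * ξ1 - D' * (α₀ + α)) := by
            apply mul_nonneg (by linarith only [hαu])
            linarith only [hα₀K, h2, mul_nonneg hD'.le (by linarith only [hαu] : 0 ≤ α₀ - α),
              mul_nonneg (sub_nonneg.mpr hKD') hα₀pos.le,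
              mul_nonneg hKpos.le hα₀pos.le]
          nlinarith only [hSv, hprod]
        · have hprod : 0 ≤ (α₀ - α) * (c * ξ1 - d * (α₀ + α)) := by
            apply mul_nonneg (by linarith only [hαu])
            linarith only [hα₀K, h2, mul_nonneg hd.le (by linarith only [hαu] : 0 ≤ α₀ - α),
              mul_nonneg (sub_nonneg.mpr hKd) hα₀pos.le,
              mul_nonneg hKpos.le hα₀pos.le]
          nlinarith only [hGv, hprod]
      · refine ⟨|α|, h1.le, hαB.trans hBC₁, ?_, ?_⟩
        · rw [sq_abs]
          linarith only [hSv,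
            mul_nonneg (mul_nonneg hcpos.le hξ1) (by linarith only [le_abs_self α] : (0:ℝ) ≤ |α| - α)]
        · rw [sq_abs]
          linarith only [hGv,
            mul_nonneg (mul_nonneg hcpos.le hξ1) (by linarith only [le_abs_self α] : (0:ℝ) ≤ |α| - α)]
    obtain ⟨a, ha₀, haC, hSa, hGa⟩ := hstep
    have ha1 : -C₁ ≤ a := by linarith only [ha₀, hα₀pos, hC₁pos]
    -- centers
    set mα := c * ξ1 / (2 * d) with hmαdef
    clear_value mα
    set mβ := c * ξ2 / (2 * d) with hmβdef
    clear_value mβ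
    have hmα0 : 0 ≤ mα := by
      rw [hmαdef]; exact div_nonneg (mul_nonneg hcpos.le hξ1) (by linarith only [hd])
    have hmβ0 : 0 ≤ mβ := by
      rw [hmβdef]; exact div_nonneg (mul_nonneg hcpos.le hξ2) (by linarith only [hd])
    have hcξ1 : c * ξ1 ≤ w + 1 := by
      have h9 := mul_le_bound hcpos.le hcw1 hξ1le zero_le_one
      linarith only [h9]
    have hcξ2 : c * ξ2 ≤ w + 1 := by
      have h9 := mul_le_bound hcpos.le hcw1 hξ2le zero_le_one
      linarith only [h9]
    have hmαC : mα ≤ C₁ := by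
      have h9 : c * ξ1 / (2 * d) ≤ (w + 1) / (2 * d) := by
        rw [div_le_div_iff₀ (by linarith only [hd]) (by linarith only [hd])]
        nlinarith only [hcξ1, hd]
      rw [hmαdef, hC₁def]; linarith only [h9, hBpos, hα₀pos]
    have hmβC : mβ ≤ C₁ := by
      have h9 : c * ξ2 / (2 * d) ≤ (w + 1) / (2 * d) := by
        rw [div_le_div_iff₀ (by linarith only [hd]) (by linarith only [hd])]
        nlinarith only [hcξ2, hd]
      rw [hmβdef, hC₁def]; linarith only [h9, hBpos, hα₀pos]
    -- value of G at the center
    have hmval : c * ξ1 * mα + c * ξ2 * mβ - d * (mα ^ 2 + mβ ^ 2) = c ^ 2 / (4 * d) := by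
      rw [hmαdef, hmβdef,
        show c * ξ1 * (c * ξ1 / (2 * d)) + c * ξ2 * (c * ξ2 / (2 * d))
          - d * ((c * ξ1 / (2 * d)) ^ 2 + (c * ξ2 / (2 * d)) ^ 2)
          = c ^ 2 * (ξ1 ^ 2 + ξ2 ^ 2) / (4 * d) from by field_simp; ring, hunit, mul_one]
    have hGm : lam + κ ≤ c * ξ1 * mα + c * ξ2 * mβ - d * (mα ^ 2 + mβ ^ 2) := by
      rw [hmval, hκdef, show lam + (w ^ 2 - 4 * d * lam) / (4 * d) = w ^ 2 / (4 * d) from by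
        field_simp; ring, div_le_div_iff₀ (by linarith only [hd]) (by linarith only [hd])]
      have h9 : w ^ 2 ≤ c ^ 2 := by nlinarith only [hwpos, hcw]
      have h8 := mul_le_mul_of_nonneg_right h9 (by linarith only [hd] : (0:ℝ) ≤ 4 * d)
      linarith only [h8]
    -- convexity of G along the segment towards the center
    have hGconv : lam + s * κ ≤ c * ξ1 * ((1 - s) * a + s * mα) + c * ξ2 * ((1 - s) * β + s * mβ)
        - d * (((1 - s) * a + s * mα) ^ 2 + ((1 - s) * β + s * mβ) ^ 2) := by
      nlinarith only [mul_le_mul_of_nonneg_left hGa h1s, mul_le_mul_of_nonneg_left hGm hs0.le,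
        mul_nonneg (mul_nonneg hd.le (mul_nonneg hs0.le h1s)) (sq_nonneg (a - mα)),
        mul_nonneg (mul_nonneg hd.le (mul_nonneg hs0.le h1s)) (sq_nonneg (β - mβ))]
    -- denominator bound for the moved point
    have hβSν : ρ ≤ ν + d * ((1 - s) * β + s * mβ) := by
      nlinarith only [mul_le_mul_of_nonneg_left hρβ h1s, mul_le_mul_of_nonneg_left hρν hs0.le,
        mul_nonneg (mul_nonneg hs0.le hd.le) hmβ0]
    -- coordinate bounds for the moved point
    have haS1 : -C₁ ≤ (1 - s) * a + s * mα := by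
      nlinarith only [mul_nonneg h1s (by linarith only [ha1] : 0 ≤ a + C₁),
        mul_nonneg hs0.le (by linarith only [hmα0, hC₁pos] : 0 ≤ mα + C₁)]
    have haS2 : (1 - s) * a + s * mα ≤ C₁ := by
      nlinarith only [mul_nonneg h1s (by linarith only [haC] : 0 ≤ C₁ - a),
        mul_nonneg hs0.le (by linarith only [hmαC] : 0 ≤ C₁ - mα)]
    have hβS1 : -C₁ ≤ (1 - s) * β + s * mβ := by
      nlinarith only [mul_nonneg h1s (by linarith only [hβlo] : 0 ≤ β + C₁),
        mul_nonneg hs0.le (by linarith only [hmβ0, hC₁pos] : 0 ≤ mβ + C₁)]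
    have hβS2 : (1 - s) * β + s * mβ ≤ C₁ := by
      nlinarith only [mul_nonneg h1s (by linarith only [hβhi] : 0 ≤ C₁ - β),
        mul_nonneg hs0.le (by linarith only [hmβC] : 0 ≤ C₁ - mβ)]
    -- chi difference bound
    have hβdiff : |d * ((1 - s) * β + s * mβ) - d * β| ≤ d * (2 * C₁ * s) := by
      rw [show d * ((1 - s) * β + s * mβ) - d * β = d * s * (mβ - β) from by ring, abs_mul,
        abs_of_nonneg (mul_nonneg hd.le hs0.le)]
      have h2 : |mβ - β| ≤ 2 * C₁ := abs_le.mpr ⟨by linarith only [hmβ0, hC₁pos, hβhi],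
        by linarith only [hmβC, hβlo, hC₁pos]⟩
      nlinarith only [mul_le_mul_of_nonneg_left h2 (mul_nonneg hd.le hs0.le)]
    have hχd : -(s * T) ≤ chiF μ ν (d * ((1 - s) * β + s * mβ)) - chiF μ ν (d * β) := by
      have h0 := chi_diff_ge hμ hν hρpos hβSν hρβ hβdiff
      have h1 : μ * ν * (d * (2 * C₁ * s)) / ρ ^ 2 = s * T := by
        rw [hTdef]; field_simp
      rw [h1] at h0
      exact h0
    -- linear perturbation bounds
    have hterm1 : c * ξ1 * (a - ((1 - s) * a + s * mα)) ≤ (w + 1) * (2 * C₁ * s) := by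
      have hv : a - ((1 - s) * a + s * mα) ≤ 2 * C₁ * s := by
        nlinarith only [mul_le_mul_of_nonneg_left
          (show a - mα ≤ 2 * C₁ by linarith only [haC, hmα0, hC₁pos]) hs0.le]
      exact mul_le_bound (mul_nonneg hcpos.le hξ1) hcξ1 hv
        (by nlinarith only [mul_pos hC₁pos hs0])
    have hterm2 : c * ξ2 * (β - ((1 - s) * β + s * mβ)) ≤ (w + 1) * (2 * C₁ * s) := by
      have hv : β - ((1 - s) * β + s * mβ) ≤ 2 * C₁ * s := by
        nlinarith only [mul_le_mul_of_nonneg_left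
          (show β - mβ ≤ 2 * C₁ by linarith only [hβhi, hmβ0, hC₁pos]) hs0.le]
      exact mul_le_bound (mul_nonneg hcpos.le hξ2) hcξ2 hv
        (by nlinarith only [mul_pos hC₁pos hs0])
    -- quadratic perturbation bound
    have hquad : D * (((1 - s) * a + s * mα) ^ 2 - a ^ 2) ≤ D' * (4 * C₁ ^ 2 * s) := by
      have h1 : |((1 - s) * a + s * mα) - a| ≤ 2 * C₁ * s := by
        rw [show ((1 - s) * a + s * mα) - a = s * (mα - a) from by ring, abs_mul,
          abs_of_nonneg hs0.le]
        have h2 : |mα - a| ≤ 2 * C₁ := abs_le.mpr ⟨by linarith only [hmα0, hC₁pos, haC],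
          by linarith only [hmαC, ha1, hC₁pos]⟩
        nlinarith only [mul_le_mul_of_nonneg_left h2 hs0.le]
      have h2 : |((1 - s) * a + s * mα) + a| ≤ 2 * C₁ :=
        abs_le.mpr ⟨by linarith only [haS1, ha1], by linarith only [haS2, haC]⟩
      have h4 : (((1 - s) * a + s * mα) - a) * (((1 - s) * a + s * mα) + a)
          ≤ (2 * C₁ * s) * (2 * C₁) := by
        calc (((1 - s) * a + s * mα) - a) * (((1 - s) * a + s * mα) + a)
            ≤ |(((1 - s) * a + s * mα) - a) * (((1 - s) * a + s * mα) + a)| := le_abs_self _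
          _ = |((1 - s) * a + s * mα) - a| * |((1 - s) * a + s * mα) + a| := abs_mul _ _
          _ ≤ (2 * C₁ * s) * (2 * C₁) := by
              apply mul_le_mul h1 h2 (abs_nonneg _)
              nlinarith only [mul_pos hC₁pos hs0]
      have e3 : ((1 - s) * a + s * mα) ^ 2 - a ^ 2 ≤ 4 * C₁ ^ 2 * s := by nlinarith only [h4]
      have e4 : D * (((1 - s) * a + s * mα) ^ 2 - a ^ 2) ≤ D * (4 * C₁ ^ 2 * s) :=
        mul_le_mul_of_nonneg_left e3 hD.le
      have e5 : D * (4 * C₁ ^ 2 * s) ≤ D' * (4 * C₁ ^ 2 * s) :=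
        mul_le_mul_of_nonneg_right hDD'.le (by nlinarith only [mul_pos (pow_pos hC₁pos 2) hs0])
      linarith only [e4, e5]
    -- eta term
    have hηt : η * (ξ1 * ((1 - s) * a + s * mα) + ξ2 * ((1 - s) * β + s * mβ)) ≤ X := by
      have u1 : ξ1 * ((1 - s) * a + s * mα) ≤ C₁ := by
        have h9 := mul_le_bound hξ1 hξ1le haS2 hC₁pos.le
        linarith only [h9]
      have u2 : ξ2 * ((1 - s) * β + s * mβ) ≤ C₁ := by
        have h9 := mul_le_bound hξ2 hξ2le hβS2 hC₁pos.le
        linarith only [h9]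
      have u3 : η * (ξ1 * ((1 - s) * a + s * mα) + ξ2 * ((1 - s) * β + s * mβ)) ≤ η * (2 * C₁) :=
        mul_le_mul_of_nonneg_left (by linarith only [u1, u2]) hη0.le
      linarith only [u3, hη2C]
    -- slack in S for the smaller diffusion coefficient
    have hS1 : δ ≤ c * ξ1 * a + c * ξ2 * β - D * a ^ 2 + chiF μ ν (d * β) := by
      have h9 : α₀ ^ 2 ≤ a ^ 2 := by nlinarith only [ha₀, hα₀pos]
      have h8 := mul_le_mul_of_nonneg_left h9 (by linarith only [hDD'] : (0:ℝ) ≤ D' - D)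
      rw [hδdef]
      nlinarith only [hSa, h8]
    have hsums : s * (4 * (w + 1) * C₁ + 4 * D' * C₁ ^ 2 + T) ≤ δ / 2 := by
      have h9 := mul_le_mul_of_nonneg_left hLbig hs0.le
      linarith only [h9, hsL]
    -- the perturbed point witnesses c - η ∈ A(D)
    have hfin : (c - η) ∈ Aset d D μ ν lam ξ1 ξ2 := by
      refine ⟨by linarith only [hcdef, hε0, hηw, hcw], ⟨((1 - s) * β + s * mβ, (1 - s) * a + s * mα), ⟨?_, ?_⟩, ?_⟩⟩
      · show -(ν / d) < (1 - s) * β + s * mβ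
        have h1 : d * (ν / d) = ν := by field_simp
        nlinarith only [hβSν, hρpos, hd, h1]
      · show 0 ≤ (c - η) * ξ1 * ((1 - s) * a + s * mα) + (c - η) * ξ2 * ((1 - s) * β + s * mβ)
          - D * ((1 - s) * a + s * mα) ^ 2 + chiF μ ν (d * ((1 - s) * β + s * mβ))
        linarith only [hS1, hterm1, hterm2, hquad, hχd, hηt, hsums, hXδ]
      · show lam ≤ (c - η) * ξ1 * ((1 - s) * a + s * mα) + (c - η) * ξ2 * ((1 - s) * β + s * mβ)
          - d * (((1 - s) * a + s * mα) ^ 2 + ((1 - s) * β + s * mβ) ^ 2)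
        linarith only [hGconv, hηt, hXκ]
    have hwle : w ≤ c - η := hAD _ hfin
    linarith only [hwle, hcdef.ge, hcdef.le, hεη, hη0]
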